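/- Fix θ ∈ ℝ^d with θ ≠ 0 and assume μ({ω ∈ S^{d−1} : ω^⊤θ = 0}) = 0 and μ({ω ∈ S^{d−1} : ω^⊤θ* = 0}) = 0. Then lim_{z→∞} P( σ(h^⊤θ)·‖h‖ > z and h^⊤θ > 0 | ‖h‖ > z ) = 0. -/

import Mathlib

open MeasureTheory ProbabilityTheory Filter Topology Set

/-- The logistic function `σ(u) = e^{-u}/(1+e^{-u})`. -/
noncomputable def logisticSigma (u : ℝ) : ℝ := Real.exp (-u) / (1 + Real.exp (-u))

/-- The stochastic gradient of the ℓ2-regularized logistic loss,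
`∇ℓ(θ,x,y) = -σ(h^⊤θ) • h + λ • θ` with `h = y • x`. -/
noncomputable def logisticGrad {d : ℕ} (θ : EuclideanSpace ℝ (Fin d)) (lam : ℝ)
    (xv : EuclideanSpace ℝ (Fin d)) (yv : ℝ) : EuclideanSpace ℝ (Fin d) :=
  (-(logisticSigma (inner ℝ (yv • xv) θ : ℝ))) • (yv • xv) + lam • θ

/-- The measure `ν(A) = μ((-A) ∩ {ω : ω^⊤θ* > 0}) + μ(A ∩ {ω : ω^⊤θ* < 0})`. -/
noncomputable def nuMeas {d : ℕ} (μ : Measure (EuclideanSpace ℝ (Fin d)))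
    (θstar : EuclideanSpace ℝ (Fin d)) (A : Set (EuclideanSpace ℝ (Fin d))) : ENNReal :=
  μ ((fun v => -v) ⁻¹' A ∩ {v | 0 < (inner ℝ v θstar : ℝ)}) +
    μ (A ∩ {v | (inner ℝ v θstar : ℝ) < 0})

lemma logisticSigma_nonneg (u : ℝ) : 0 ≤ logisticSigma u := by
  unfold logisticSigma
  positivity

lemma logisticSigma_le_exp (u : ℝ) : logisticSigma u ≤ Real.exp (-u) := by
  unfold logisticSigma
  apply div_le_self (Real.exp_pos _).le
  linarith [Real.exp_pos (-u)]

lemma mul_exp_le_aux (c t : ℝ) (hc : 0 < c) (ht : 0 ≤ t) :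
    t * Real.exp (-(c * t)) ≤ 1 / (c * Real.exp 1) := by
  have h1 : c * t ≤ Real.exp (c * t - 1) := by
    linarith [Real.add_one_le_exp (c * t - 1)]
  rw [Real.exp_sub] at h1
  have hexp := Real.exp_pos (c * t)
  have he := Real.exp_pos 1
  rw [Real.exp_neg, ← div_eq_mul_inv, div_le_div_iff₀ hexp (by positivity)]
  have h2 : c * t * Real.exp 1 ≤ Real.exp (c * t) := by
    have h3 := mul_le_mul_of_nonneg_right h1 he.le
    rwa [div_mul_cancel₀ _ he.ne'] at h3
  nlinarith

/-- `lim_{z→∞} P(σ(h^⊤θ)·‖h‖ > z and h^⊤θ > 0 | ‖h‖ > z) = 0`. -/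
theorem logistic_sigma_tail_pos_part
    {d : ℕ} {Ω : Type*} [MeasurableSpace Ω] (P : Measure Ω) [IsProbabilityMeasure P]
    (x : Ω → EuclideanSpace ℝ (Fin d)) (y : Ω → ℝ)
    (hxmeas : Measurable x) (hymeas : Measurable y)
    (hy : ∀ᵐ ω ∂P, y ω = 1 ∨ y ω = -1)
    (θstar : EuclideanSpace ℝ (Fin d))
    (hcond : ∀ S : Set (EuclideanSpace ℝ (Fin d)), MeasurableSet S →
        (P ({ω | y ω = 1} ∩ x ⁻¹' S)).toReal
          = ∫ ω in x ⁻¹' S, 1 / (1 + Real.exp (-(inner ℝ (x ω) θstar : ℝ))) ∂P)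
    (α : ℝ) (hα : α ∈ Set.Ioo (1:ℝ) 2)
    (hxpos : ∀ z : ℝ, 0 < P {ω | ‖x ω‖ > z})
    (hreg : ∀ t : ℝ, 0 < t →
        Tendsto (fun z : ℝ => (P {ω | ‖x ω‖ > t * z}).toReal / (P {ω | ‖x ω‖ > z}).toReal)
          atTop (𝓝 (t ^ (-α))))
    (μ : Measure (EuclideanSpace ℝ (Fin d))) [IsProbabilityMeasure μ]
    (hμsphere : μ {v | ‖v‖ = 1}ᶜ = 0)
    (hang : ∀ A : Set (EuclideanSpace ℝ (Fin d)), MeasurableSet A → μ (frontier A) = 0 →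
        Tendsto (fun z : ℝ =>
            (P ({ω | (‖x ω‖)⁻¹ • x ω ∈ A} ∩ {ω | ‖x ω‖ > z})).toReal /
              (P {ω | ‖x ω‖ > z}).toReal)
          atTop (𝓝 (μ A).toReal))
    (β1 β2 : ℝ) (hβ1 : 0 < β1) (hβ2 : 0 < β2)
    (hint1 : ∫⁻ v in {v | 0 < (inner ℝ v θstar : ℝ)},
        ENNReal.ofReal ((inner ℝ v θstar : ℝ) ^ (-β1)) ∂μ < ⊤)
    (hint2 : ∫⁻ v in {v | (inner ℝ v θstar : ℝ) < 0},
        ENNReal.ofReal ((-(inner ℝ v θstar : ℝ)) ^ (-β2)) ∂μ < ⊤)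
    (θ : EuclideanSpace ℝ (Fin d)) (hθ : θ ≠ 0)
    (hμθ : μ {v | (inner ℝ v θ : ℝ) = 0} = 0)
    (hμθs : μ {v | (inner ℝ v θstar : ℝ) = 0} = 0) :
    Tendsto (fun z : ℝ =>
        (P ({ω | logisticSigma (inner ℝ (y ω • x ω) θ : ℝ) * ‖y ω • x ω‖ > z ∧
              0 < (inner ℝ (y ω • x ω) θ : ℝ)} ∩ {ω | ‖y ω • x ω‖ > z})).toReal /
          (P {ω | ‖y ω • x ω‖ > z}).toReal)
      atTop (𝓝 0) := by
  classical
  have hcontf : Continuous fun v : EuclideanSpace ℝ (Fin d) => (inner ℝ v θ : ℝ) :=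
    continuous_id.inner continuous_const
  have hA : ∀ c : ℝ, MeasurableSet {v : EuclideanSpace ℝ (Fin d) | |(inner ℝ v θ : ℝ)| ≤ c} :=
    fun c => (isClosed_le hcontf.abs continuous_const).measurableSet
  rw [NormedAddCommGroup.tendsto_nhds_zero]
  intro ε hε
  -- continuity from above: μ {|⟨v,θ⟩| ≤ 1/(n+1)} → μ {⟨v,θ⟩ = 0} = 0
  set s : ℕ → Set (EuclideanSpace ℝ (Fin d)) :=
    fun n => {v | |(inner ℝ v θ : ℝ)| ≤ 1 / (n + 1)} with hsdef
  have hanti : Antitone s := by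
    intro n m hnm v hv
    simp only [hsdef, mem_setOf_eq] at hv ⊢
    refine hv.trans (one_div_le_one_div_of_le (by positivity) ?_)
    exact_mod_cast Nat.add_le_add_right hnm 1
  have hiInter : (⋂ n, s n) = {v | (inner ℝ v θ : ℝ) = 0} := by
    ext v
    simp only [mem_iInter, hsdef, mem_setOf_eq]
    constructor
    · intro h
      by_contra h0
      obtain ⟨n, hn⟩ := exists_nat_one_div_lt (abs_pos.2 h0)
      exact absurd (h n) (not_le.2 hn)
    · intro h n
      rw [h, abs_zero]
      positivity
  have htend : Tendsto (fun n => μ (s n)) atTop (𝓝 0) := by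
    have := tendsto_measure_iInter_atTop (μ := μ)
      (fun n => (hA _).nullMeasurableSet) hanti ⟨0, measure_ne_top μ _⟩
    rwa [hiInter, hμθ] at this
  obtain ⟨n0, hn0⟩ := (htend.eventually_lt_const (ENNReal.ofReal_pos.2 hε)).exists
  set c0 : ℝ := 1 / (n0 + 1) with hc0def
  have hc0pos : 0 < c0 := by positivity
  -- pick c ∈ (0, c0] with μ {|⟨v,θ⟩| = c} = 0
  have hbad : Set.Countable {t : ℝ | 0 < μ {v | |(inner ℝ v θ : ℝ)| = t}} :=
    Measure.countable_meas_level_set_pos₀ hcontf.abs.measurable.nullMeasurable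
  have hex : ∃ c ∈ Set.Ioc (0:ℝ) c0, μ {v | |(inner ℝ v θ : ℝ)| = c} = 0 := by
    by_contra hcon
    push_neg at hcon
    have hsub : Set.Ioc (0:ℝ) c0 ⊆ {t : ℝ | 0 < μ {v | |(inner ℝ v θ : ℝ)| = t}} :=
      fun t ht => pos_iff_ne_zero.2 (hcon t ht)
    have hcnt : (Set.Ioc (0:ℝ) c0).Countable := hbad.mono hsub
    have hle := hcnt.le_aleph0
    rw [Cardinal.mk_Ioc_real hc0pos] at hle
    exact absurd hle Cardinal.aleph0_lt_continuum.not_ge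
  obtain ⟨c, ⟨hcpos, hcle⟩, hcnull⟩ := hex
  -- the cone set
  set Ac : Set (EuclideanSpace ℝ (Fin d)) := {v | |(inner ℝ v θ : ℝ)| ≤ c} with hAcdef
  have hfr : μ (frontier Ac) = 0 :=
    measure_mono_null (frontier_le_subset_eq hcontf.abs continuous_const) hcnull
  have hAcsmall : (μ Ac).toReal < ε := by
    refine ENNReal.toReal_lt_of_lt_ofReal (lt_of_le_of_lt (measure_mono ?_) hn0)
    intro v hv
    exact le_trans hv hcle
  have hg := hang Ac (hA c) hfr
  have hgev : ∀ᶠ z in atTop,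
      (P ({ω | (‖x ω‖)⁻¹ • x ω ∈ Ac} ∩ {ω | ‖x ω‖ > z})).toReal /
        (P {ω | ‖x ω‖ > z}).toReal < ε := hg.eventually_lt_const hAcsmall
  filter_upwards [hgev, eventually_gt_atTop (1 / (c * Real.exp 1))] with z hz1 hz2
  have hzpos : 0 < z := lt_trans (by positivity) hz2
  -- denominators agree a.e.
  have hden : P {ω | ‖y ω • x ω‖ > z} = P {ω | ‖x ω‖ > z} := by
    apply measure_congr
    rw [Filter.eventuallyEq_set]
    filter_upwards [hy] with ω hω
    rcases hω with h | h <;> simp [mem_setOf_eq, norm_smul, h]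
  -- numerator inclusion a.e.
  have hnum : P ({ω | logisticSigma (inner ℝ (y ω • x ω) θ : ℝ) * ‖y ω • x ω‖ > z ∧
        0 < (inner ℝ (y ω • x ω) θ : ℝ)} ∩ {ω | ‖y ω • x ω‖ > z})
      ≤ P ({ω | (‖x ω‖)⁻¹ • x ω ∈ Ac} ∩ {ω | ‖x ω‖ > z}) := by
    apply measure_mono_ae
    filter_upwards [hy] with ω hω hmem
    obtain ⟨⟨hσ, hu⟩, hnz⟩ := hmem
    have hynorm : ‖y ω • x ω‖ = ‖x ω‖ := by
      rcases hω with h | h <;> simp [norm_smul, h]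
    have hxz : ‖x ω‖ > z := by rw [← hynorm]; exact hnz
    have hxposn : 0 < ‖x ω‖ := lt_trans hzpos hxz
    refine ⟨?_, hxz⟩
    show |(inner ℝ ((‖x ω‖)⁻¹ • x ω) θ : ℝ)| ≤ c
    by_contra hcon
    push_neg at hcon
    rw [real_inner_smul_left, abs_mul, abs_inv, abs_norm] at hcon
    have h1 : c * ‖x ω‖ < |(inner ℝ (x ω) θ : ℝ)| := by
      have h3 := mul_lt_mul_of_pos_right hcon hxposn
      rwa [mul_right_comm, inv_mul_cancel₀ hxposn.ne', one_mul] at h3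
    have habs : |(inner ℝ (y ω • x ω) θ : ℝ)| = |(inner ℝ (x ω) θ : ℝ)| := by
      rw [real_inner_smul_left, abs_mul]
      rcases hω with h | h <;> simp [h]
    have hu' : c * ‖x ω‖ < (inner ℝ (y ω • x ω) θ : ℝ) := by
      rw [← abs_of_pos hu, habs]; exact h1
    have hσle : logisticSigma (inner ℝ (y ω • x ω) θ : ℝ) ≤ Real.exp (-(c * ‖x ω‖)) :=
      le_trans (logisticSigma_le_exp _) (Real.exp_le_exp.2 (by linarith))
    have hb := mul_exp_le_aux c (‖x ω‖) hcpos hxposn.le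
    have hσx : logisticSigma (inner ℝ (y ω • x ω) θ : ℝ) * ‖y ω • x ω‖
        ≤ ‖x ω‖ * Real.exp (-(c * ‖x ω‖)) := by
      rw [hynorm, mul_comm (‖x ω‖)]
      exact mul_le_mul_of_nonneg_right hσle hxposn.le
    linarith
  -- conclude
  have hdpos : 0 < (P {ω | ‖x ω‖ > z}).toReal :=
    ENNReal.toReal_pos (hxpos z).ne' (measure_ne_top _ _)
  have hrle : (P ({ω | logisticSigma (inner ℝ (y ω • x ω) θ : ℝ) * ‖y ω • x ω‖ > z ∧
        0 < (inner ℝ (y ω • x ω) θ : ℝ)} ∩ {ω | ‖y ω • x ω‖ > z})).toReal /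
      (P {ω | ‖y ω • x ω‖ > z}).toReal
      ≤ (P ({ω | (‖x ω‖)⁻¹ • x ω ∈ Ac} ∩ {ω | ‖x ω‖ > z})).toReal /
        (P {ω | ‖x ω‖ > z}).toReal := by
    rw [hden]
    exact div_le_div_of_nonneg_right (ENNReal.toReal_mono (measure_ne_top _ _) hnum) hdpos.le
  rw [Real.norm_eq_abs, abs_of_nonneg (by positivity)]
  exact lt_of_le_of_lt hrle hz1
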